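/- arXiv:1409.7115 — 2 statements merged into one kernel-verified Lean document; each statement's English description precedes it below -/
import Mathlib

section
/- Let W(x_1,...,x_n) be a quasihomogeneous polynomial with an isolated singularity at the origin, where deg(x_i) = d_i > 0, and let I ⊂ {1,...,n} be the set of indices i with d_i > 1. Then the polynomial W̃(y_1,...,y_n) = W(y_1^{d_1},...,y_n^{d_n}) has an isolated singularity at the origin if and only if for every subset J ⊂ I the restriction of W to the linear subspace {x_j = 0 for all j ∈ J} has an isolated singularity at the origin. -/
open MvPolynomial

/-- `W` is quasihomogeneous of some degree with respect to the weights `d`. -/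
def IsQuasiHomogeneous {n : ℕ} (W : MvPolynomial (Fin n) ℂ) (d : Fin n → ℕ) : Prop :=
  ∃ dW : ℕ, ∀ (c : ℂ) (x : Fin n → ℂ),
    eval (fun i => c ^ (d i) * x i) W = c ^ dW * eval x W

/-- The restriction of `W` to the linear subspace `{x : x_j = 0 for j ∈ J}` has an isolated
singularity at the origin: any point of the subspace lying on the hypersurface `W = 0` at which
all partial derivatives of `W` along the subspace vanish is the origin. -/
def HasIsolatedSingularityOn {n : ℕ} (W : MvPolynomial (Fin n) ℂ) (J : Set (Fin n)) : Prop :=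
  ∀ x : Fin n → ℂ, (∀ j ∈ J, x j = 0) →
    (∀ i ∉ J, eval x (pderiv i W) = 0) → eval x W = 0 → x = 0

/-- `W` has an isolated singularity at the origin. -/
def HasIsolatedSingularity {n : ℕ} (W : MvPolynomial (Fin n) ℂ) : Prop :=
  HasIsolatedSingularityOn W (∅ : Set (Fin n))

lemma my_pderiv_aeval_pow {n : ℕ} (d : Fin n → ℕ) (i : Fin n) (p : MvPolynomial (Fin n) ℂ) :
    pderiv i (aeval (fun j => (X j : MvPolynomial (Fin n) ℂ) ^ d j) p) =
      (d i : MvPolynomial (Fin n) ℂ) * X i ^ (d i - 1) *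
        aeval (fun j => (X j : MvPolynomial (Fin n) ℂ) ^ d j) (pderiv i p) := by
  induction p using MvPolynomial.induction_on with
  | C a => simp
  | add p q hp hq => simp only [map_add, hp, hq]; ring
  | mul_X p j hp =>
    simp only [map_mul, aeval_X, pderiv_mul, hp, pderiv_pow]
    rcases eq_or_ne i j with rfl | hij
    · simp only [pderiv_X_self, map_one, map_add, map_mul, aeval_X]; ring
    · simp only [pderiv_X_of_ne hij.symm, map_zero, mul_zero, add_zero, map_mul, aeval_X]; ring

lemma my_eval_aeval_pow {n : ℕ} (d : Fin n → ℕ) (p : MvPolynomial (Fin n) ℂ) (y : Fin n → ℂ) :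
    eval y (aeval (fun j => (X j : MvPolynomial (Fin n) ℂ) ^ d j) p) =
      eval (fun j => y j ^ d j) p := by
  rw [← coe_aeval_eq_eval, RingHom.coe_coe, comp_aeval_apply]
  simp only [map_pow, aeval_X]; rfl

/-- Lemma `isolated-lem` of the paper: for a quasihomogeneous polynomial
`W(x_1,…,x_n)` with an isolated singularity, with `deg x_i = d_i > 0`, and
`W̃(y) = W(y_1^{d_1},…,y_n^{d_n})`, letting `I = {i : d_i > 1}`, the polynomial `W̃` has an
isolated singularity at the origin if and only if for every subset `J ⊆ I` the restriction
`W|_{𝔸^n_J}` has an isolated singularity at the origin. -/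
theorem isolated_singularity_of_cover {n : ℕ} (W : MvPolynomial (Fin n) ℂ)
    (d : Fin n → ℕ) (hd : ∀ i, 0 < d i)
    (hquasi : IsQuasiHomogeneous W d)
    (hisol : HasIsolatedSingularity W)
    (Wt : MvPolynomial (Fin n) ℂ)
    (hWt : Wt = aeval (fun i => (X i : MvPolynomial (Fin n) ℂ) ^ (d i)) W) :
    HasIsolatedSingularity Wt ↔
      ∀ J : Set (Fin n), J ⊆ {i | 1 < d i} → HasIsolatedSingularityOn W J := by
  subst hWt
  constructor
  · intro hT J hJ x hx0 hder hW
    -- choose d i-th roots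
    have hroot : ∀ i, ∃ w : ℂ, w ^ d i = x i := fun i =>
      IsAlgClosed.exists_pow_nat_eq (x i) (hd i)
    choose y hy using hroot
    have hy0 : ∀ i, x i = 0 → y i = 0 := by
      intro i hxi
      have := hy i
      rw [hxi] at this
      exact pow_eq_zero_iff (hd i).ne' |>.mp this
    have hyW : eval y (aeval (fun i => (X i : MvPolynomial (Fin n) ℂ) ^ d i) W) = 0 := by
      rw [my_eval_aeval_pow]
      have : (fun j => y j ^ d j) = x := funext hy
      rw [this, hW]
    have hyder : ∀ i, (i : Fin n) ∉ (∅ : Set (Fin n)) →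
        eval y (pderiv i (aeval (fun j => (X j : MvPolynomial (Fin n) ℂ) ^ d j) W)) = 0 := by
      intro i _
      rw [my_pderiv_aeval_pow]
      simp only [map_mul, map_pow, eval_X, map_natCast, my_eval_aeval_pow]
      have : (fun j => y j ^ d j) = x := funext hy
      rw [this]
      by_cases hiJ : i ∈ J
      · have h1 : 1 < d i := hJ hiJ
        have : y i = 0 := hy0 i (hx0 i hiJ)
        rw [this, zero_pow (by omega : d i - 1 ≠ 0)]
        ring
      · rw [hder i hiJ]; ring
    have : y = 0 := hT y (by simp) hyder hyW
    funext i
    have : y i = 0 := congrFun this i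
    rw [← hy i, this, zero_pow (hd i).ne']
    rfl
  · intro h y _ hder hW
    set x : Fin n → ℂ := fun i => y i ^ d i with hx
    set J : Set (Fin n) := {i | 1 < d i ∧ x i = 0} with hJdef
    have hx0 : x = 0 := by
      refine h J (fun i hi => hi.1) x (fun j hj => hj.2) ?_ ?_
      · intro i hiJ
        have hdi := hder i (Set.notMem_empty i)
        rw [my_pderiv_aeval_pow] at hdi
        simp only [map_mul, map_pow, eval_X, map_natCast, my_eval_aeval_pow] at hdi
        rcases mul_eq_zero.mp hdi with h0 | h0
        · rcases mul_eq_zero.mp h0 with h0 | h0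
          · exact absurd h0 (by exact_mod_cast (hd i).ne')
          · exfalso
            rcases pow_eq_zero_iff' (M₀ := ℂ) |>.mp h0 with ⟨hy0, hne⟩
            exact hiJ ⟨by omega, by rw [hx]; simp [hy0, (hd i).ne']⟩
        · exact h0
      · rw [← my_eval_aeval_pow d W y]; exact hW
    funext i
    have : y i ^ d i = 0 := congrFun hx0 i
    simpa using pow_eq_zero_iff (hd i).ne' |>.mp this
end

section
/- Let E be a ℤ-graded matrix factorization of 0 over a base S with trivial 𝔾_m-action, decomposed by weights as E_b = ⊕_i E_{b,i} (b ∈ {0,1}), and let mf be the folding functor sending a bounded complex C^• of vector bundles to the matrix factorization with even part ⊕_n C^{2n}{−nd} and odd part ⊕_n C^{2n−1}{−nd}. Let com_0(E) be the complex ... → E_{1,0} → E_{0,0} → E_{1,d} → ... extracted from the weight-graded pieces. Then mf is left adjoint to com_0: there is a natural isomorphism Hom(mf(C^•), F) ≅ Hom(C^•, com_0(F)) of complexes. -/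
open CategoryTheory

noncomputable section

universe u

variable (R : Type u) [CommRing R] (d : ℤ)
  (F0 F1 : ℤ → Type u)
  [∀ w, AddCommGroup (F0 w)] [∀ w, AddCommGroup (F1 w)]
  [∀ w, Module R (F0 w)] [∀ w, Module R (F1 w)]
  (δ0 : ∀ w : ℤ, F0 w →ₗ[R] F1 (w + d)) (δ1 : ∀ w : ℤ, F1 w →ₗ[R] F0 w)
  (C : ℤ → Type u) [∀ j, AddCommGroup (C j)] [∀ j, Module R (C j)]
  (dC : ∀ j : ℤ, C j →ₗ[R] C (j + 1))

/-- The "folded" family of a weight-graded matrix factorization `F = (F0, F1, δ0, δ1)` of `0`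
of weight `d`: `Ffold m w` is the target of the degree-`m` component of a `Hom` of internal
weight `w`; for even `m` it is `F0(w + d·m/2)`, for odd `m` it is `F1(w + d·(m+1)/2)`.
In particular `com₀(F)` is the complex `j ↦ Ffold j 0`, i.e.
`⋯ → F1_{,0} → F0_{,0} → F1_{,d} → ⋯` with `F0_{,0}` in degree `0`. -/
def Ffold (m w : ℤ) : ModuleCat.{u} R :=
  if m % 2 = 0 then ModuleCat.of R (F0 (w + d * (m / 2)))
  else ModuleCat.of R (F1 (w + d * ((m + 1) / 2)))

/-- The differential `Ffold m w ⟶ Ffold (m+1) w` induced by `δ0` and `δ1`. -/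
def FfoldD (m w : ℤ) : Ffold R d F0 F1 m w ⟶ Ffold R d F0 F1 (m + 1) w :=
  if h : m % 2 = 0 then
    eqToHom (by simp only [Ffold, if_pos h]) ≫
      ModuleCat.ofHom (δ0 (w + d * (m / 2))) ≫
      eqToHom (by
        have hq : (m + 1 + 1) / 2 = m / 2 + 1 := by omega
        have hidx : w + d * (m / 2) + d = w + d * ((m + 1 + 1) / 2) := by rw [hq]; ring
        rw [hidx]
        simp only [Ffold, if_neg (show ¬((m + 1) % 2 = 0) by omega)])
  else
    eqToHom (by simp only [Ffold, if_neg h]) ≫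
      ModuleCat.ofHom (δ1 (w + d * ((m + 1) / 2))) ≫
      eqToHom (by
        simp only [Ffold, if_pos (show (m + 1) % 2 = 0 by omega)])

/-- The even part of the folding `mf(C)` of a bounded complex `C`: as a weight-graded bundle,
`mf(C)₀ = ⊕_n C^{2n}{-nd}`, whose piece of weight `w` is `C^{2(w/d)}` if `d ∣ w` and `0`
otherwise. -/
def MfZero (w : ℤ) : ModuleCat.{u} R :=
  if d ∣ w then ModuleCat.of R (C (2 * (w / d))) else ModuleCat.of R (PUnit : Type u)

/-- The odd part of the folding `mf(C)`: `mf(C)₁ = ⊕_n C^{2n-1}{-nd}`. -/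
def MfOne (w : ℤ) : ModuleCat.{u} R :=
  if d ∣ w then ModuleCat.of R (C (2 * (w / d) - 1)) else ModuleCat.of R (PUnit : Type u)

/-- The component `δ₁ : mf(C)₁ → mf(C)₀` of the matrix factorization `mf(C)` of `0`,
given by the differential of `C`. -/
def MfD1 (w : ℤ) : MfOne R d C w ⟶ MfZero R d C w :=
  if h : d ∣ w then
    eqToHom (by simp only [MfOne, if_pos h]) ≫
      ModuleCat.ofHom (dC (2 * (w / d) - 1)) ≫
      eqToHom (by
        have : 2 * (w / d) - 1 + 1 = 2 * (w / d) := by omega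
        rw [this]
        simp only [MfZero, if_pos h])
  else 0

/-- The component `δ₀ : mf(C)₀ → mf(C)₁{d}` of the matrix factorization `mf(C)` of `0`. -/
def MfD0 (hd : 0 < d) (w : ℤ) : MfZero R d C w ⟶ MfOne R d C (w + d) :=
  if h : d ∣ w then
    eqToHom (by simp only [MfZero, if_pos h]) ≫
      ModuleCat.ofHom (dC (2 * (w / d))) ≫
      eqToHom (by
        have hdvd : d ∣ w + d := (dvd_add h (dvd_refl d))
        have hq : (w + d) / d = w / d + 1 := by
          obtain ⟨c, rfl⟩ := h
          rw [show d * c + d = d * (c + 1) by ring,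
            Int.mul_ediv_cancel_left _ (by omega : d ≠ 0),
            Int.mul_ediv_cancel_left _ (by omega : d ≠ 0)]
        have : 2 * (w / d) + 1 = 2 * ((w + d) / d) - 1 := by rw [hq]; ring
        rw [this]
        simp only [MfOne, if_pos hdvd])
  else 0

/-- The degree-`m` component of the `2`-periodic `Hom`-complex `Hom(mf(C), F)` in the category
of weight-graded matrix factorizations of `0`:  for `m = 2n` it is
`Hom(mf(C)₀, F₀{dn}) ⊕ Hom(mf(C)₁, F₁{dn})`, for `m = 2n+1` it is
`Hom(mf(C)₀, F₁{d(n+1)}) ⊕ Hom(mf(C)₁, F₀{dn})`; uniformly, weight-`0` (i.e.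
`𝔾ₘ`-invariant) maps `mf(C)₀ → Ffold m ·` and `mf(C)₁ → Ffold (m-1) ·`. -/
abbrev HomMF (m : ℤ) : Type u :=
  (∀ w : ℤ, MfZero R d C w ⟶ Ffold R d F0 F1 m w) ×
    (∀ w : ℤ, MfOne R d C w ⟶ Ffold R d F0 F1 (m - 1) w)

/-- The gluing isomorphism `Ffold (m-1) (w+d) = Ffold (m+1) w`. -/
theorem Ffold_glue (m w : ℤ) :
    Ffold R d F0 F1 (m - 1) (w + d) = Ffold R d F0 F1 (m + 1) w := by
  by_cases h : (m - 1) % 2 = 0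
  · have h' : ¬((m + 1) % 2 ≠ 0) := by omega
    have hq : (m + 1) / 2 = (m - 1) / 2 + 1 := by omega
    have hidx : w + d + d * ((m - 1) / 2) = w + d * ((m + 1) / 2) := by rw [hq]; ring
    simp only [Ffold, if_pos h, if_pos (show (m + 1) % 2 = 0 by omega)]
    rw [hidx]
  · have hq : (m + 1 + 1) / 2 = (m - 1 + 1) / 2 + 1 := by omega
    have hidx : w + d + d * ((m - 1 + 1) / 2) = w + d * ((m + 1 + 1) / 2) := by rw [hq]; ring
    simp only [Ffold, if_neg h, if_neg (show ¬((m + 1) % 2 = 0) by omega)]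
    rw [hidx]

/-- The differential of the `Hom`-complex `Hom(mf(C), F)`, `f ↦ δ_F ∘ f - (-1)^m f ∘ δ_{mf(C)}`. -/
def HomMFD (hd : 0 < d) (m : ℤ) (f : HomMF R d F0 F1 C m) : HomMF R d F0 F1 C (m + 1) :=
  ⟨fun w =>
      f.1 w ≫ FfoldD R d F0 F1 δ0 δ1 m w -
        (Int.negOnePow m : ℤ) •
          (MfD0 R d C dC hd w ≫ f.2 (w + d) ≫ eqToHom (Ffold_glue R d F0 F1 m w)),
    fun w =>
      (f.2 w ≫ FfoldD R d F0 F1 δ0 δ1 (m - 1) w ≫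
          eqToHom (by rw [show m - 1 + 1 = m + 1 - 1 by omega])) -
        (Int.negOnePow m : ℤ) •
          (MfD1 R d C dC w ≫ f.1 w ≫
            eqToHom (congrArg (fun t => Ffold R d F0 F1 t w) (by omega : m = m + 1 - 1)))⟩

/-- The degree-`m` component of the `Hom`-complex `Hom(C, com₀(F))` of complexes, where
`com₀(F)` is the complex `j ↦ Ffold j 0`, i.e. `⋯ → F1_{,0} → F0_{,0} → F1_{,d} → ⋯`
extracted from the weight-graded pieces of `F`. -/
abbrev HomCx (m : ℤ) : Type u :=
  ∀ j : ℤ, ModuleCat.of R (C j) ⟶ Ffold R d F0 F1 (j + m) 0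

/-- The differential of the `Hom`-complex `Hom(C, com₀(F))`,
`f ↦ d_{com₀(F)} ∘ f - (-1)^m f ∘ d_C`. -/
def HomCxD (m : ℤ) (f : HomCx R d F0 F1 C m) : HomCx R d F0 F1 C (m + 1) :=
  fun j =>
    f j ≫ FfoldD R d F0 F1 δ0 δ1 (j + m) 0 ≫
        eqToHom (by rw [show j + m + 1 = j + (m + 1) by ring]) -
      (Int.negOnePow m : ℤ) •
        (ModuleCat.ofHom (dC j) ≫ f (j + 1) ≫
          eqToHom (by rw [show j + 1 + m = j + (m + 1) by ring]))


/-! ### Auxiliary lemmas -/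

section Aux

lemma conj_two {ι : Sort*} {κ : Sort*} (X Y : ι → ModuleCat.{u} R) (U V : κ → ModuleCat.{u} R)
    (g : ∀ i, X i ⟶ Y i) (k : ∀ j, U j ⟶ V j) {a b : ι} {u v : κ}
    (ha : a = b) (hu : u = v) {A B : ModuleCat.{u} R}
    (p : A = X a) (q : Y a = U u) (r : V u = B)
    (p' : A = X b) (q' : Y b = U v) (r' : V v = B) :
    eqToHom p ≫ g a ≫ eqToHom q ≫ k u ≫ eqToHom r =
      eqToHom p' ≫ g b ≫ eqToHom q' ≫ k v ≫ eqToHom r' := by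
  subst ha; subst hu; rfl

lemma conj_two_left {ι : Sort*} {κ : Sort*} (X Y : ι → ModuleCat.{u} R) (U V : κ → ModuleCat.{u} R)
    (g : ∀ i, X i ⟶ Y i) (k : ∀ j, U j ⟶ V j) {a b : ι} {u v : κ}
    (ha : a = b) (hu : u = v) {B : ModuleCat.{u} R}
    (p : X b = X a) (q : Y a = U u) (r : V u = B)
    (q' : Y b = U v) (r' : V v = B) :
    eqToHom p ≫ g a ≫ eqToHom q ≫ k u ≫ eqToHom r =
      g b ≫ eqToHom q' ≫ k v ≫ eqToHom r' := by
  subst ha; subst hu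
  rw [show p = rfl from rfl, eqToHom_refl, Category.id_comp]

lemma conj_collapse {ι : Sort*} (X Y : ι → ModuleCat.{u} R) (g : ∀ i, X i ⟶ Y i)
    {a b : ι} (h : a = b) (P : X b = X a) (Q : Y a = Y b) :
    eqToHom P ≫ g a ≫ eqToHom Q = g b := by
  subst h
  rw [show P = rfl from rfl, show Q = rfl from rfl, eqToHom_refl, eqToHom_refl,
    Category.id_comp, Category.comp_id]

lemma hom_from_trivial {X Y : ModuleCat.{u} R} (hX : X = ModuleCat.of R (PUnit : Type u))
    (f : X ⟶ Y) : f = 0 := by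
  subst hX
  apply ModuleCat.hom_ext
  apply LinearMap.ext
  intro x
  rw [Subsingleton.elim x 0, map_zero]
  simp

end Aux


section Aux2

lemma Ffold_shift (m n m' : ℤ) (h : m' = m + 2 * n) :
    Ffold R d F0 F1 m (d * n) = Ffold R d F0 F1 m' 0 := by
  by_cases hm : m % 2 = 0
  · have h1 : d * n + d * (m / 2) = 0 + d * (m' / 2) := by
      have : m' / 2 = m / 2 + n := by omega
      rw [this]; ring
    simp only [Ffold, if_pos hm, if_pos (show m' % 2 = 0 by omega)]
    rw [h1]
  · have h1 : d * n + d * ((m + 1) / 2) = 0 + d * ((m' + 1) / 2) := by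
      have : (m' + 1) / 2 = (m + 1) / 2 + n := by omega
      rw [this]; ring
    simp only [Ffold, if_neg hm, if_neg (show ¬(m' % 2 = 0) by omega)]
    rw [h1]

lemma MfZero_dom (hd : 0 < d) (j : ℤ) (hj : j % 2 = 0) :
    MfZero R d C (d * (j / 2)) = ModuleCat.of R (C j) := by
  have h1 : d ∣ d * (j / 2) := dvd_mul_right d _
  simp only [MfZero, if_pos h1]
  have h2 : 2 * (d * (j / 2) / d) = j := by
    rw [Int.mul_ediv_cancel_left _ (by omega : d ≠ 0)]; omega
  rw [h2]

lemma MfOne_dom (hd : 0 < d) (j : ℤ) (hj : ¬(j % 2 = 0)) :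
    MfOne R d C (d * ((j + 1) / 2)) = ModuleCat.of R (C j) := by
  have h1 : d ∣ d * ((j + 1) / 2) := dvd_mul_right d _
  simp only [MfOne, if_pos h1]
  have h2 : 2 * (d * ((j + 1) / 2) / d) - 1 = j := by
    rw [Int.mul_ediv_cancel_left _ (by omega : d ≠ 0)]; omega
  rw [h2]

end Aux2


section Aux3

/-- The forward map of the adjunction. -/
def toCx (hd : 0 < d) (m : ℤ) (f : HomMF R d F0 F1 C m) : HomCx R d F0 F1 C m := fun j =>
  if hj : j % 2 = 0 then
    eqToHom (MfZero_dom R d C hd j hj).symm ≫ f.1 (d * (j / 2)) ≫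
      eqToHom (Ffold_shift R d F0 F1 m (j / 2) (j + m) (by omega))
  else
    eqToHom (MfOne_dom R d C hd j hj).symm ≫ f.2 (d * ((j + 1) / 2)) ≫
      eqToHom (Ffold_shift R d F0 F1 (m - 1) ((j + 1) / 2) (j + m) (by omega))

/-- The backward map of the adjunction. -/
def fromCx (hd : 0 < d) (m : ℤ) (g : HomCx R d F0 F1 C m) : HomMF R d F0 F1 C m :=
  ⟨fun w =>
    if h : d ∣ w then
      eqToHom (by simp only [MfZero, if_pos h]) ≫ g (2 * (w / d)) ≫
        eqToHom ((Ffold_shift R d F0 F1 m (w / d) (2 * (w / d) + m) (by omega)).symm.trans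
          (by rw [Int.mul_ediv_cancel' h]))
    else 0,
   fun w =>
    if h : d ∣ w then
      eqToHom (by simp only [MfOne, if_pos h]) ≫ g (2 * (w / d) - 1) ≫
        eqToHom ((Ffold_shift R d F0 F1 (m - 1) (w / d) (2 * (w / d) - 1 + m)
            (by omega)).symm.trans (by rw [Int.mul_ediv_cancel' h]))
    else 0⟩

lemma fromCx_toCx (hd : 0 < d) (m : ℤ) (f : HomMF R d F0 F1 C m) :
    fromCx R d F0 F1 C hd m (toCx R d F0 F1 C hd m f) = f := by
  have hd' : d ≠ 0 := by omega
  refine Prod.ext (funext fun w => ?_) (funext fun w => ?_)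
  · simp only [fromCx]
    by_cases h : d ∣ w
    · rw [dif_pos h]
      have he : (2 * (w / d)) % 2 = 0 := by omega
      simp only [toCx, dif_pos he, ← Category.assoc]
      simp only [eqToHom_trans, Category.assoc, eqToHom_trans, eqToHom_trans_assoc]
      exact conj_collapse R (fun w' => MfZero R d C w') (fun w' => Ffold R d F0 F1 m w')
        f.1 (by rw [show 2 * (w / d) / 2 = w / d by omega, Int.mul_ediv_cancel' h]) _ _
    · rw [dif_neg h]
      exact (hom_from_trivial R (by simp only [MfZero, if_neg h]) (f.1 w)).symm
  · simp only [fromCx]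
    by_cases h : d ∣ w
    · rw [dif_pos h]
      have ho : ¬((2 * (w / d) - 1) % 2 = 0) := by omega
      simp only [toCx, dif_neg ho, ← Category.assoc]
      simp only [eqToHom_trans, Category.assoc, eqToHom_trans, eqToHom_trans_assoc]
      exact conj_collapse R (fun w' => MfOne R d C w')
        (fun w' => Ffold R d F0 F1 (m - 1) w') f.2
        (by rw [show (2 * (w / d) - 1 + 1) / 2 = w / d by omega, Int.mul_ediv_cancel' h]) _ _
    · rw [dif_neg h]
      exact (hom_from_trivial R (by simp only [MfOne, if_neg h]) (f.2 w)).symm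

lemma toCx_fromCx (hd : 0 < d) (m : ℤ) (g : HomCx R d F0 F1 C m) :
    toCx R d F0 F1 C hd m (fromCx R d F0 F1 C hd m g) = g := by
  have hd' : d ≠ 0 := by omega
  funext j
  by_cases hj : j % 2 = 0
  · have h1 : d ∣ d * (j / 2) := dvd_mul_right d _
    simp only [toCx, dif_pos hj, fromCx, dif_pos h1, ← Category.assoc]
    simp only [eqToHom_trans, Category.assoc, eqToHom_trans, eqToHom_trans_assoc]
    exact conj_collapse R (fun i => ModuleCat.of R (C i))
      (fun i => Ffold R d F0 F1 (i + m) 0) g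
      (by rw [Int.mul_ediv_cancel_left _ hd']; omega) _ _
  · have h1 : d ∣ d * ((j + 1) / 2) := dvd_mul_right d _
    simp only [toCx, dif_neg hj, fromCx, dif_pos h1, ← Category.assoc]
    simp only [eqToHom_trans, Category.assoc, eqToHom_trans, eqToHom_trans_assoc]
    exact conj_collapse R (fun i => ModuleCat.of R (C i))
      (fun i => Ffold R d F0 F1 (i + m) 0) g
      (by rw [Int.mul_ediv_cancel_left _ hd']; omega) _ _

end Aux3


section Aux4

set_option maxHeartbeats 2000000 in
lemma key (hd : 0 < d) (m : ℤ) (f : HomMF R d F0 F1 C m) (j : ℤ) :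
    toCx R d F0 F1 C hd (m + 1) (HomMFD R d F0 F1 δ0 δ1 C dC hd m f) j =
      HomCxD R d F0 F1 δ0 δ1 C dC m (toCx R d F0 F1 C hd m f) j := by
  have hd' : d ≠ 0 := by omega
  by_cases hj : j % 2 = 0
  · have hj1 : ¬((j + 1) % 2 = 0) := by omega
    have hdvd : d ∣ d * (j / 2) := dvd_mul_right d _
    simp only [toCx, HomCxD, HomMFD, dif_pos hj, dif_neg hj1]
    simp only [Preadditive.comp_sub, Preadditive.sub_comp, Preadditive.comp_zsmul,
      Preadditive.zsmul_comp, Category.assoc]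
    congr 1
    · by_cases hm : m % 2 = 0
      · simp only [FfoldD, dif_pos hm, dif_pos (show (j + m) % 2 = 0 by omega),
          Category.assoc, eqToHom_trans, eqToHom_trans_assoc]
        exact conj_two R (fun w' => MfZero R d C w') (fun w' => Ffold R d F0 F1 m w')
          (fun i => ModuleCat.of R (F0 i)) (fun i => ModuleCat.of R (F1 (i + d)))
          f.1 (fun i => ModuleCat.ofHom (δ0 i)) rfl
          (show d * (j / 2) + d * (m / 2) = 0 + d * ((j + m) / 2) by
            have h2 : (j + m) / 2 = j / 2 + m / 2 := by omega
            rw [h2]; ring) _ _ _ _ _ _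
      · simp only [FfoldD, dif_neg hm, dif_neg (show ¬((j + m) % 2 = 0) by omega),
          Category.assoc, eqToHom_trans, eqToHom_trans_assoc]
        exact conj_two R (fun w' => MfZero R d C w') (fun w' => Ffold R d F0 F1 m w')
          (fun i => ModuleCat.of R (F1 i)) (fun i => ModuleCat.of R (F0 i))
          f.1 (fun i => ModuleCat.ofHom (δ1 i)) rfl
          (show d * (j / 2) + d * ((m + 1) / 2) = 0 + d * ((j + m + 1) / 2) by
            have h2 : (j + m + 1) / 2 = j / 2 + (m + 1) / 2 := by omega
            rw [h2]; ring) _ _ _ _ _ _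
    · congr 1
      simp only [MfD0, dif_pos hdvd, Category.assoc, eqToHom_trans, eqToHom_trans_assoc]
      exact conj_two_left R (fun i => ModuleCat.of R (C i))
        (fun i => ModuleCat.of R (C (i + 1)))
        (fun w' => MfOne R d C w') (fun w' => Ffold R d F0 F1 (m - 1) w')
        (fun i => ModuleCat.ofHom (dC i)) f.2
        (show 2 * (d * (j / 2) / d) = j by
          rw [Int.mul_ediv_cancel_left _ hd']; omega)
        (show d * (j / 2) + d = d * ((j + 1 + 1) / 2) by
          have h2 : (j + 1 + 1) / 2 = j / 2 + 1 := by omega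
          rw [h2]; ring) _ _ _ _ _
  · have hj1 : (j + 1) % 2 = 0 := by omega
    have hdvd : d ∣ d * ((j + 1) / 2) := dvd_mul_right d _
    simp only [toCx, HomCxD, HomMFD, dif_neg hj, dif_pos hj1]
    simp only [Preadditive.comp_sub, Preadditive.sub_comp, Preadditive.comp_zsmul,
      Preadditive.zsmul_comp, Category.assoc]
    congr 1
    · by_cases hm : m % 2 = 0
      · simp only [FfoldD, dif_neg (show ¬((m - 1) % 2 = 0) by omega),
          dif_neg (show ¬((j + m) % 2 = 0) by omega), Category.assoc, eqToHom_trans, eqToHom_trans_assoc]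
        exact conj_two R (fun w' => MfOne R d C w') (fun w' => Ffold R d F0 F1 (m - 1) w')
          (fun i => ModuleCat.of R (F1 i)) (fun i => ModuleCat.of R (F0 i))
          f.2 (fun i => ModuleCat.ofHom (δ1 i)) rfl
          (show d * ((j + 1) / 2) + d * ((m - 1 + 1) / 2) = 0 + d * ((j + m + 1) / 2) by
            have h2 : (j + m + 1) / 2 = (j + 1) / 2 + (m - 1 + 1) / 2 := by omega
            rw [h2]; ring) _ _ _ _ _ _
      · simp only [FfoldD, dif_pos (show (m - 1) % 2 = 0 by omega),
          dif_pos (show (j + m) % 2 = 0 by omega), Category.assoc, eqToHom_trans, eqToHom_trans_assoc]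
        exact conj_two R (fun w' => MfOne R d C w') (fun w' => Ffold R d F0 F1 (m - 1) w')
          (fun i => ModuleCat.of R (F0 i)) (fun i => ModuleCat.of R (F1 (i + d)))
          f.2 (fun i => ModuleCat.ofHom (δ0 i)) rfl
          (show d * ((j + 1) / 2) + d * ((m - 1) / 2) = 0 + d * ((j + m) / 2) by
            have h2 : (j + m) / 2 = (j + 1) / 2 + (m - 1) / 2 := by omega
            rw [h2]; ring) _ _ _ _ _ _
    · congr 1
      simp only [MfD1, dif_pos hdvd, Category.assoc, eqToHom_trans, eqToHom_trans_assoc]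
      exact conj_two_left R (fun i => ModuleCat.of R (C i))
        (fun i => ModuleCat.of R (C (i + 1)))
        (fun w' => MfZero R d C w') (fun w' => Ffold R d F0 F1 m w')
        (fun i => ModuleCat.ofHom (dC i)) f.1
        (show 2 * (d * ((j + 1) / 2) / d) - 1 = j by
          rw [Int.mul_ediv_cancel_left _ hd']; omega)
        rfl _ _ _ _ _

end Aux4


section Aux5

lemma toCx_add (hd : 0 < d) (m : ℤ) (f g : HomMF R d F0 F1 C m) :
    toCx R d F0 F1 C hd m (f + g) =
      toCx R d F0 F1 C hd m f + toCx R d F0 F1 C hd m g := by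
  funext j
  by_cases hj : j % 2 = 0
  · simp only [toCx, dif_pos hj, Pi.add_apply, Prod.fst_add,
      Preadditive.add_comp, Preadditive.comp_add]
  · simp only [toCx, dif_neg hj, Pi.add_apply, Prod.snd_add,
      Preadditive.add_comp, Preadditive.comp_add]

lemma toCx_smul (hd : 0 < d) (m : ℤ) (c : R) (f : HomMF R d F0 F1 C m) :
    toCx R d F0 F1 C hd m (c • f) = c • toCx R d F0 F1 C hd m f := by
  funext j
  by_cases hj : j % 2 = 0
  · simp only [toCx, dif_pos hj, Pi.smul_apply, Prod.smul_fst,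
      Linear.smul_comp, Linear.comp_smul]
  · simp only [toCx, dif_neg hj, Pi.smul_apply, Prod.smul_snd,
      Linear.smul_comp, Linear.comp_smul]

end Aux5

/-- Proposition `com-maf-prop`(ii) of the paper: Let `F = (F0, F1, δ0, δ1)` be a
`𝔾ₘ`-equivariant matrix factorization of `0` of weight `d > 0` over a base with trivial
`𝔾ₘ`-action (a weight-graded matrix factorization: `δ1 : F1 → F0` of weight `0`,
`δ0 : F0 → F1{d}`, with both composites zero), and let `C` be a bounded complex of
(weight-`0`) bundles.  Then the folding functor `mf` is left adjoint to `com₀`: there is a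
natural isomorphism of complexes `Hom(mf(C), F) ≅ Hom(C, com₀(F))`, i.e. a family of linear
equivalences between the degree-`m` components commuting with the differentials of the two
`Hom`-complexes. -/
theorem mf_left_adjoint_com0
    (hd : 0 < d)
    (hδ01 : ∀ w : ℤ, (δ1 (w + d)) ∘ₗ (δ0 w) = 0)
    (hδ10 : ∀ w : ℤ, (δ0 w) ∘ₗ (δ1 w) = 0)
    (hdC : ∀ j : ℤ, (dC (j + 1)) ∘ₗ (dC j) = 0)
    (hbdd : ∃ N : ℤ, ∀ j : ℤ, N < |j| → Subsingleton (C j)) :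
    ∃ e : ∀ m : ℤ, HomMF R d F0 F1 C m ≃ₗ[R] HomCx R d F0 F1 C m,
      ∀ (m : ℤ) (f : HomMF R d F0 F1 C m),
        e (m + 1) (HomMFD R d F0 F1 δ0 δ1 C dC hd m f) =
          HomCxD R d F0 F1 δ0 δ1 C dC m (e m f) := by
  refine ⟨fun m =>
    { toFun := toCx R d F0 F1 C hd m
      map_add' := toCx_add R d F0 F1 C hd m
      map_smul' := toCx_smul R d F0 F1 C hd m
      invFun := fromCx R d F0 F1 C hd m
      left_inv := fromCx_toCx R d F0 F1 C hd m
      right_inv := toCx_fromCx R d F0 F1 C hd m },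
    fun m f => funext (key R d F0 F1 δ0 δ1 C dC hd m f)⟩

end
end
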